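/- Let X, Y ⊂ ℝ^D be nonempty disjoint closed sets and define g(x) = dist_Y(x) − dist_X(x), S = {x : g(x) = 0}, and the signed distance s(x) = sgn(g(x))·dist_S(x). Then s is 1-Lipschitz: |s(x) − s(y)| ≤ |x−y| for all x, y. -/
import Mathlib

lemma sign_abs_le_one (r : ℝ) : |Real.sign r| ≤ 1 := by
  rcases lt_trichotomy r 0 with h|h|h
  · simp [Real.sign_of_neg h]
  · simp [h]
  · simp [Real.sign_of_pos h]

/-- The signed distance function `s(x) = sgn(g(x))·dist_S(x)`, with
`g(x) = dist_Y(x) − dist_X(x)` and `S = {g = 0}`, is 1-Lipschitz, for `X, Y`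
nonempty disjoint closed subsets of `ℝ^D` with `S` nonempty. -/
theorem signed_dist_lipschitz {D : ℕ} (X Y : Set (EuclideanSpace ℝ (Fin D)))
    (hXc : IsClosed X) (hYc : IsClosed Y) (hXne : X.Nonempty) (hYne : Y.Nonempty)
    (hdisj : Disjoint X Y)
    (g : EuclideanSpace ℝ (Fin D) → ℝ)
    (hg : ∀ x, g x = Metric.infDist x Y - Metric.infDist x X)
    (S : Set (EuclideanSpace ℝ (Fin D))) (hS : S = {x | g x = 0})
    (hSne : S.Nonempty)
    (s : EuclideanSpace ℝ (Fin D) → ℝ)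
    (hs : ∀ x, s x = Real.sign (g x) * Metric.infDist x S) :
    ∀ x y, |s x - s y| ≤ dist x y := by
  have hgc : Continuous g := by
    have : g = fun x => Metric.infDist x Y - Metric.infDist x X := funext hg
    rw [this]
    exact (Metric.continuous_infDist_pt Y).sub (Metric.continuous_infDist_pt X)
  -- key : mixed sign case
  have key : ∀ a b : EuclideanSpace ℝ (Fin D), 0 < g a → g b < 0 →
      Metric.infDist a S + Metric.infDist b S ≤ dist a b := by
    intro a b ha hb
    set f : ℝ → EuclideanSpace ℝ (Fin D) := fun t => a + t • (b - a) with hf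
    have hfc : Continuous f := continuous_const.add (continuous_id.smul continuous_const)
    have hf0 : f 0 = a := by simp [hf]
    have hf1 : f 1 = b := by simp [hf]
    have hmem : (0 : ℝ) ∈ Set.Icc ((g ∘ f) 1) ((g ∘ f) 0) := by
      simp only [Function.comp, hf0, hf1]
      exact ⟨le_of_lt hb, le_of_lt ha⟩
    obtain ⟨t, ht, hgt⟩ := intermediate_value_Icc' (by norm_num : (0:ℝ) ≤ 1)
      (hgc.comp hfc).continuousOn hmem
    have hzS : f t ∈ S := by rw [hS]; exact hgt
    have e1 : a - f t = t • (a - b) := by simp [hf]; module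
    have e2 : b - f t = (1 - t) • (b - a) := by simp [hf]; module
    have d1 : dist a (f t) = t * ‖a - b‖ := by
      rw [dist_eq_norm, e1, norm_smul, Real.norm_eq_abs, abs_of_nonneg ht.1]
    have d2 : dist b (f t) = (1 - t) * ‖a - b‖ := by
      rw [dist_eq_norm, e2, norm_smul, Real.norm_eq_abs, abs_of_nonneg (by linarith [ht.2]),
        norm_sub_rev]
    calc Metric.infDist a S + Metric.infDist b S
        ≤ dist a (f t) + dist b (f t) :=
          add_le_add (Metric.infDist_le_dist_of_mem hzS) (Metric.infDist_le_dist_of_mem hzS)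
      _ = ‖a - b‖ := by rw [d1, d2]; ring
      _ = dist a b := (dist_eq_norm a b).symm
  intro x y
  have hlip : |Metric.infDist x S - Metric.infDist y S| ≤ dist x y := by
    rw [abs_sub_le_iff]
    constructor
    · linarith [Metric.infDist_le_infDist_add_dist (x := x) (y := y) (s := S)]
    · have := Metric.infDist_le_infDist_add_dist (x := y) (y := x) (s := S)
      rw [dist_comm] at this; linarith
  have hzero : ∀ a b : EuclideanSpace ℝ (Fin D), g a = 0 → |s a - s b| ≤ dist a b := by
    intro a b ha
    have haS : a ∈ S := by rw [hS]; exact ha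
    have h1 : s a = 0 := by
      rw [hs, Metric.infDist_zero_of_mem haS, mul_zero]
    rw [h1, zero_sub, abs_neg, hs, abs_mul]
    calc |Real.sign (g b)| * |Metric.infDist b S|
        ≤ 1 * |Metric.infDist b S| :=
          mul_le_mul_of_nonneg_right (sign_abs_le_one _) (abs_nonneg _)
      _ = Metric.infDist b S := by
          rw [one_mul, abs_of_nonneg Metric.infDist_nonneg]
      _ ≤ dist b a := Metric.infDist_le_dist_of_mem haS
      _ = dist a b := dist_comm b a
  rcases lt_trichotomy (g x) 0 with hx|hx|hx
  · rcases lt_trichotomy (g y) 0 with hy|hy|hy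
    · -- both negative
      rw [hs, hs, Real.sign_of_neg hx, Real.sign_of_neg hy,
        show (-1:ℝ) * Metric.infDist x S - (-1) * Metric.infDist y S
          = -(Metric.infDist x S - Metric.infDist y S) by ring, abs_neg]
      exact hlip
    · rw [abs_sub_comm, dist_comm]; exact hzero y x hy
    · -- x neg, y pos
      rw [hs, hs, Real.sign_of_neg hx, Real.sign_of_pos hy]
      have h := key y x hy hx
      rw [dist_comm] at h
      rw [abs_le]
      constructor <;>
        nlinarith [Metric.infDist_nonneg (x := x) (s := S),
          Metric.infDist_nonneg (x := y) (s := S), dist_nonneg (x := x) (y := y)]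
  · exact hzero x y hx
  · rcases lt_trichotomy (g y) 0 with hy|hy|hy
    · -- x pos, y neg
      rw [hs, hs, Real.sign_of_pos hx, Real.sign_of_neg hy]
      have h := key x y hx hy
      rw [abs_le]
      constructor <;>
        nlinarith [Metric.infDist_nonneg (x := x) (s := S),
          Metric.infDist_nonneg (x := y) (s := S), dist_nonneg (x := x) (y := y)]
    · rw [abs_sub_comm, dist_comm]; exact hzero y x hy
    · rw [hs, hs, Real.sign_of_pos hx, Real.sign_of_pos hy]
      simpa using hlip
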